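/- arXiv:2002.07562 — 2 statements merged into one kernel-verified Lean document; each statement's English description precedes it below -/
import Mathlib

section
/- The NFA M_r whose states are RS(r), initial state r, transitions given by the SOS relation —a→, and accepting states those r' ∈ RS(r) with r'√, accepts exactly the language L(r): L(M_r) = L(r). -/
open RegularExpression

/-- The acceptance predicate √ on regular expressions. -/
inductive Surd {α : Type} : RegularExpression α → Prop
  | eps : Surd 1
  | star (r : RegularExpression α) : Surd (RegularExpression.star r)
  | plusL {r₁ r₂ : RegularExpression α} : Surd r₁ → Surd (r₁ + r₂)
  | plusR {r₁ r₂ : RegularExpression α} : Surd r₂ → Surd (r₁ + r₂)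
  | comp {r₁ r₂ : RegularExpression α} : Surd r₁ → Surd r₂ → Surd (r₁ * r₂)

/-- The SOS transition relation r —a→ r'. -/
inductive Deriv {α : Type} : RegularExpression α → α → RegularExpression α → Prop
  | char (a : α) : Deriv (RegularExpression.char a) a 1
  | plusL {r₁ r₂ r₁' : RegularExpression α} {a : α} :
      Deriv r₁ a r₁' → Deriv (r₁ + r₂) a r₁'
  | plusR {r₁ r₂ r₂' : RegularExpression α} {a : α} :
      Deriv r₂ a r₂' → Deriv (r₁ + r₂) a r₂'
  | compL {r₁ r₂ r₁' : RegularExpression α} {a : α} :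
      Deriv r₁ a r₁' → Deriv (r₁ * r₂) a (r₁' * r₂)
  | compR {r₁ r₂ r₂' : RegularExpression α} {a : α} :
      Surd r₁ → Deriv r₂ a r₂' → Deriv (r₁ * r₂) a r₂'
  | star {r r'' : RegularExpression α} {a : α} :
      Deriv r a r'' → Deriv (RegularExpression.star r) a (r'' * RegularExpression.star r)

/-- Multi-step transitions labelled by a word. -/
inductive Derivs {α : Type} : RegularExpression α → List α → RegularExpression α → Prop
  | nil (r : RegularExpression α) : Derivs r [] r
  | cons {r r' r'' : RegularExpression α} {a : α} {w : List α} :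
      Deriv r a r' → Derivs r' w r'' → Derivs r (a :: w) r''

/-- The reachability set RS(r). -/
def RS {α : Type} (r : RegularExpression α) : Set (RegularExpression α) :=
  {r' | Relation.ReflTransGen (fun s t => ∃ a, Deriv s a t) r r'}

/-- Syntactic size of a regular expression. -/
def rsize {α : Type} : RegularExpression α → ℕ
  | RegularExpression.zero => 1
  | RegularExpression.epsilon => 1
  | RegularExpression.char _ => 1
  | RegularExpression.plus r₁ r₂ => rsize r₁ + rsize r₂ + 1
  | RegularExpression.comp r₁ r₂ => rsize r₁ + rsize r₂ + 1
  | RegularExpression.star r => rsize r + 1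

/-- The NFA M_r built from the SOS semantics, with states the reachability set RS(r). -/
def Mr {α : Type} (r : RegularExpression α) : NFA α {s : RegularExpression α // s ∈ RS r} where
  step := fun q a => {q' | Deriv q.1 a q'.1}
  start := {⟨r, Relation.ReflTransGen.refl⟩}
  accept := {q | Surd q.1}

lemma nil_mem_mul' {α : Type} {l m : Language α} : [] ∈ l * m ↔ [] ∈ l ∧ [] ∈ m := by
  constructor
  · intro h
    rcases Language.mem_mul.mp h with ⟨u, hu, v, hv, huv⟩
    rcases List.append_eq_nil_iff.mp huv with ⟨rfl, rfl⟩
    exact ⟨hu, hv⟩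
  · rintro ⟨h1, h2⟩
    exact Language.mem_mul.mpr ⟨[], h1, [], h2, rfl⟩

lemma surd_iff {α : Type} {r : RegularExpression α} : Surd r ↔ [] ∈ r.matches' := by
  constructor
  · intro h
    induction h with
    | eps => exact Language.nil_mem_one
    | star r => exact Language.nil_mem_kstar _
    | plusL _ ih => exact Or.inl ih
    | plusR _ ih => exact Or.inr ih
    | comp _ _ ih1 ih2 => exact nil_mem_mul'.mpr ⟨ih1, ih2⟩
  · intro h
    induction r with
    | zero => exact absurd h (by simp [matches'_zero])
    | epsilon => exact Surd.eps
    | char a =>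
      rw [matches'_char] at h
      change ([] : List α) = [a] at h
      exact (List.cons_ne_nil _ _ h.symm).elim
    | plus r₁ r₂ ih1 ih2 =>
      rcases h with h | h
      · exact Surd.plusL (ih1 h)
      · exact Surd.plusR (ih2 h)
    | comp r₁ r₂ ih1 ih2 =>
      rcases nil_mem_mul'.mp h with ⟨h1, h2⟩
      exact Surd.comp (ih1 h1) (ih2 h2)
    | star r ih => exact Surd.star r

lemma deriv_sound {α : Type} {r r' : RegularExpression α} {a : α} {w : List α}
    (h : Deriv r a r') (hw : w ∈ r'.matches') : a :: w ∈ r.matches' := by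
  induction h generalizing w with
  | char b =>
    rw [matches'_epsilon, Language.mem_one] at hw; subst hw
    rw [matches'_char]; rfl
  | @plusL r₁ r₂ r₁' b _ ih => exact Or.inl (ih hw)
  | @plusR r₁ r₂ r₂' b _ ih => exact Or.inr (ih hw)
  | @compL r₁ r₂ r₁' b _ ih =>
    rw [matches'_mul] at hw ⊢
    rcases Language.mem_mul.mp hw with ⟨u, hu, v, hv, rfl⟩
    exact Language.mem_mul.mpr ⟨b :: u, ih hu, v, hv, rfl⟩
  | @compR r₁ r₂ r₂' b hs _ ih =>
    rw [matches'_mul]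
    exact Language.mem_mul.mpr ⟨[], surd_iff.mp hs, b :: w, ih hw, rfl⟩
  | @star s s'' b _ ih =>
    rw [matches'_mul, matches'_star] at hw
    rcases Language.mem_mul.mp hw with ⟨u, hu, v, hv, rfl⟩
    rcases Language.mem_kstar.mp hv with ⟨L, rfl, hL⟩
    rw [matches'_star]
    have key : ((b :: u) :: L).flatten ∈ KStar.kstar s.matches' := Language.join_mem_kstar
      (by
        intro y hy
        rcases List.mem_cons.mp hy with rfl | hy
        · exact ih hu
        · exact hL y hy)
    simpa using key

lemma deriv_complete {α : Type} {r : RegularExpression α} {a : α} {w : List α}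
    (h : a :: w ∈ r.matches') : ∃ r', Deriv r a r' ∧ w ∈ r'.matches' := by
  induction r generalizing a w with
  | zero => exact absurd h (by simp [matches'_zero])
  | epsilon =>
    have h' : a :: w ∈ (1 : Language α) := h
    simp [Language.mem_one] at h'
  | char b =>
    simp only [matches'_char, Set.mem_singleton_iff, List.cons.injEq] at h
    obtain ⟨rfl, rfl⟩ := h
    exact ⟨1, Deriv.char _, Language.nil_mem_one⟩
  | plus r₁ r₂ ih1 ih2 =>
    rcases h with h | h
    · rcases ih1 h with ⟨r', hd, hw⟩; exact ⟨r', Deriv.plusL hd, hw⟩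
    · rcases ih2 h with ⟨r', hd, hw⟩; exact ⟨r', Deriv.plusR hd, hw⟩
  | comp r₁ r₂ ih1 ih2 =>
    have h' : a :: w ∈ r₁.matches' * r₂.matches' := h
    rcases Language.mem_mul.mp h' with ⟨u, hu, v, hv, huv⟩
    cases u with
    | nil =>
      simp only [List.nil_append] at huv; subst huv
      rcases ih2 hv with ⟨r₂', hd, hw⟩
      exact ⟨r₂', Deriv.compR (surd_iff.mpr hu) hd, hw⟩
    | cons b u' =>
      simp only [List.cons_append, List.cons.injEq] at huv
      obtain ⟨rfl, rfl⟩ := huv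
      rcases ih1 hu with ⟨r₁', hd, hu'⟩
      refine ⟨r₁' * r₂, Deriv.compL hd, ?_⟩
      rw [matches'_mul]
      exact Language.mem_mul.mpr ⟨u', hu', v, hv, rfl⟩
  | star s ih =>
    rw [matches'_star, Language.mem_kstar_iff_exists_nonempty] at h
    rcases h with ⟨S, hS, hne⟩
    cases S with
    | nil => simp at hS
    | cons t S' =>
      cases t with
      | nil => exact absurd rfl (hne [] List.mem_cons_self).2
      | cons b u =>
        simp only [List.flatten_cons, List.cons_append, List.cons.injEq] at hS
        obtain ⟨rfl, rfl⟩ := hS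
        rcases ih (hne (a :: u) List.mem_cons_self).1 with ⟨r'', hd, hu⟩
        refine ⟨r'' * RegularExpression.star s, Deriv.star hd, ?_⟩
        rw [matches'_mul, matches'_star]
        refine Language.mem_mul.mpr ⟨u, hu, S'.flatten, ?_, rfl⟩
        exact Language.join_mem_kstar fun y hy => (hne y (List.mem_cons_of_mem _ hy)).1

lemma derivs_matches {α : Type} {r : RegularExpression α} {w : List α} :
    w ∈ r.matches' ↔ ∃ r', Derivs r w r' ∧ Surd r' := by
  induction w generalizing r with
  | nil =>
    constructor
    · intro h; exact ⟨r, Derivs.nil r, surd_iff.mpr h⟩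
    · rintro ⟨r', hd, hs⟩; cases hd; exact surd_iff.mp hs
  | cons a w ih =>
    constructor
    · intro h
      rcases deriv_complete h with ⟨r', hd, hw⟩
      rcases ih.mp hw with ⟨r'', hds, hs⟩
      exact ⟨r'', Derivs.cons hd hds, hs⟩
    · rintro ⟨r'', hds, hs⟩
      cases hds with
      | cons hd hds' => exact deriv_sound hd (ih.mpr ⟨r'', hds', hs⟩)

lemma derivs_mem_RS {α : Type} {r q s : RegularExpression α} {w : List α}
    (hq : q ∈ RS r) (h : Derivs q w s) : s ∈ RS r := by
  induction h with
  | nil => exact hq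
  | cons hd _ ih => exact ih (Relation.ReflTransGen.tail hq ⟨_, hd⟩)

lemma derivs_nil_eq {α : Type} {r s : RegularExpression α} (h : Derivs r [] s) : r = s := by
  cases h; rfl

lemma derivs_append {α : Type} {r s : RegularExpression α} {u v : List α} :
    Derivs r (u ++ v) s ↔ ∃ t, Derivs r u t ∧ Derivs t v s := by
  induction u generalizing r with
  | nil =>
    simp only [List.nil_append]
    exact ⟨fun h => ⟨r, Derivs.nil r, h⟩, fun ⟨t, ht, hs⟩ => by cases ht; exact hs⟩
  | cons a u ih =>
    constructor
    · intro h
      rcases h with _ | ⟨hd, hds⟩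
      rcases ih.mp (by assumption) with ⟨t, h1, h2⟩
      exact ⟨t, Derivs.cons hd h1, h2⟩
    · rintro ⟨t, ht, h2⟩
      rcases ht with _ | ⟨hd, hds⟩
      exact Derivs.cons hd (ih.mpr ⟨t, by assumption, h2⟩)

lemma Mr_eval {α : Type} (r : RegularExpression α) (w : List α) :
    (Mr r).eval w = {q | Derivs r w q.1} := by
  induction w using List.reverseRecOn with
  | nil =>
    ext q
    constructor
    · rintro rfl; exact Derivs.nil r
    · intro h
      exact Set.mem_singleton_iff.mpr (Subtype.ext (derivs_nil_eq h).symm)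
  | append_singleton w a ih =>
    rw [NFA.eval_append_singleton, ih]
    ext q
    rw [NFA.mem_stepSet]
    constructor
    · rintro ⟨t, ht, hstep⟩
      exact Set.mem_setOf.mpr (derivs_append.mpr ⟨t.1, ht, Derivs.cons hstep (Derivs.nil _)⟩)
    · intro h
      rcases derivs_append.mp h with ⟨t, h1, h2⟩
      rcases h2 with _ | ⟨hd, hds⟩
      have : t = _ := rfl
      cases derivs_nil_eq (by assumption : Derivs _ [] q.1)
      exact ⟨⟨t, derivs_mem_RS Relation.ReflTransGen.refl h1⟩, h1, by assumption⟩

theorem Mr_accepts {α : Type} (r : RegularExpression α) :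
    (Mr r).accepts = r.matches' := by
  ext w
  rw [NFA.mem_accepts]
  change (∃ S ∈ (Mr r).accept, S ∈ (Mr r).eval w) ↔ _
  rw [Mr_eval, derivs_matches]
  constructor
  · rintro ⟨q, hacc, hev⟩
    exact ⟨q.1, hev, hacc⟩
  · rintro ⟨r', hd, hs⟩
    exact ⟨⟨r', derivs_mem_RS Relation.ReflTransGen.refl hd⟩, hs, hd⟩
end

section
/- If r —a→ r' is an SOS transition between regular expressions, then L(r') ⊆ { w : a·w ∈ L(r) }, i.e., the 'target language' of any transition is contained in the Brzozowski derivative of L(r) with respect to a. -/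
open RegularExpression

lemma surd_nil {α : Type} {r : RegularExpression α} (h : Surd r) : [] ∈ r.matches' := by
  induction h with
  | eps => exact rfl
  | star r => exact Language.nil_mem_kstar _
  | plusL _ ih => exact Or.inl ih
  | plusR _ ih => exact Or.inr ih
  | comp _ _ ih₁ ih₂ => exact ⟨[], ih₁, [], ih₂, rfl⟩

theorem deriv_target_subset_derivative {α : Type} {r r' : RegularExpression α} {a : α}
    (h : Deriv r a r') :
    ∀ w : List α, w ∈ r'.matches' → (a :: w) ∈ r.matches' := by
  induction h with
  | char a =>
    intro w hw
    have : w = [] := hw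
    subst this; exact rfl
  | plusL _ ih => intro w hw; exact Or.inl (ih w hw)
  | plusR _ ih => intro w hw; exact Or.inr (ih w hw)
  | @compL r₁ r₂ r₁' a hd ih =>
    intro w hw
    obtain ⟨u, hu, v, hv, rfl⟩ := hw
    exact ⟨a :: u, ih u hu, v, hv, rfl⟩
  | @compR r₁ r₂ r₂' a hs hd ih =>
    intro w hw
    exact ⟨[], surd_nil hs, a :: w, ih w hw, rfl⟩
  | @star s s'' a hd ih =>
    intro w hw
    obtain ⟨u, hu, v, hv, rfl⟩ := hw
    rw [RegularExpression.matches'_star] at hv ⊢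
    show (a :: u) ++ v ∈ _
    rw [← Language.one_add_self_mul_kstar_eq_kstar]
    exact Or.inr ⟨a :: u, ih u hu, v, hv, rfl⟩
end
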